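/- Let (Ω, P) be a finite probability space carrying random variables S : Ω → {0,1} with P(S=s) > 0 for s ∈ {0,1} and X : Ω → α with α finite, and for s ∈ {0,1} let p_s(x) = P(X = x | S = s). Then for any classifier c : α → {0,1}, |P(c(X)=1 | S=0) − P(c(X)=1 | S=1)| ≤ √(2 · JS(p₀, p₁)). -/

import Mathlib

open Finset

open Classical in
/-- Probability of an event on a finite probability space given by a weight function `P`. -/
noncomputable def pr {Ω : Type*} [Fintype Ω] (P : Ω → ℝ) (E : Ω → Prop) : ℝ :=
  ∑ ω, if E ω then P ω else 0

open Classical in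
/-- Kullback–Leibler divergence of finitely supported pmfs (natural logarithm),
restricted to the support of `p`. -/
noncomputable def KL {α : Type*} [Fintype α] (p q : α → ℝ) : ℝ :=
  ∑ x, if 0 < p x then p x * Real.log (p x / q x) else 0

/-- Jensen–Shannon divergence of finitely supported pmfs. -/
noncomputable def JS {α : Type*} [Fintype α] (p q : α → ℝ) : ℝ :=
  KL p (fun x => (p x + q x) / 2) / 2 + KL q (fun x => (p x + q x) / 2) / 2

/-! ### Auxiliary lemmas -/

noncomputable def phiAux (x : ℝ) : ℝ := Real.log x - Real.log (1-x) - 4*x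

lemma phiAux_deriv {x : ℝ} (hx : x ∈ Set.Ioo (0:ℝ) 1) :
    HasDerivAt phiAux (x⁻¹ + (1-x)⁻¹ - 4) x := by
  obtain ⟨h0, h1⟩ := hx
  have h1x : (1:ℝ) - x ≠ 0 := by linarith
  have d1 : HasDerivAt (fun x : ℝ => Real.log (1-x)) ((1-x)⁻¹ * (-1)) x :=
    (Real.hasDerivAt_log h1x).comp x ((hasDerivAt_id x).const_sub 1)
  have := ((Real.hasDerivAt_log h0.ne').sub d1).sub ((hasDerivAt_id x).const_mul 4)
  exact this.congr_deriv (by ring)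

lemma phiAux_mono : MonotoneOn phiAux (Set.Ioo (0:ℝ) 1) := by
  apply monotoneOn_of_deriv_nonneg (convex_Ioo 0 1)
  · intro x hx
    exact (phiAux_deriv hx).continuousAt.continuousWithinAt
  · intro x hx
    rw [interior_Ioo] at hx
    exact (phiAux_deriv hx).differentiableAt.differentiableWithinAt
  · intro x hx
    rw [interior_Ioo] at hx
    rw [(phiAux_deriv hx).deriv]
    obtain ⟨h0, h1⟩ := hx
    have hq : x * (1-x) ≤ 1/4 := by nlinarith [sq_nonneg (x - 1/2)]
    have h1x : (0:ℝ) < 1 - x := by linarith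
    rw [sub_nonneg]
    have : x⁻¹ + (1-x)⁻¹ = (x*(1-x))⁻¹ := by
      field_simp
      ring
    rw [this]
    have hxp : (0:ℝ) < x*(1-x) := by positivity
    calc (4:ℝ) = (1/4 : ℝ)⁻¹ := by norm_num
    _ ≤ (x*(1-x))⁻¹ := by apply inv_anti₀ hxp hq

noncomputable def gAux (c x : ℝ) : ℝ :=
  x * Real.log x + (1-x) * Real.log (1-x)
    - (x * Real.log c + (1-x) * Real.log (1-c)) - 2*(x-c)^2

lemma gAux_deriv {c x : ℝ} (hx : x ∈ Set.Ioo (0:ℝ) 1) :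
    HasDerivAt (gAux c) (phiAux x - phiAux c) x := by
  obtain ⟨h0, h1⟩ := hx
  have h1x : (1:ℝ) - x ≠ 0 := by linarith
  have d1 : HasDerivAt (fun x : ℝ => (1-x) * Real.log (1-x)) ((Real.log (1-x) + 1) * (-1)) x :=
    (Real.hasDerivAt_mul_log h1x).comp x ((hasDerivAt_id x).const_sub 1)
  have d2 : HasDerivAt (fun x : ℝ => x * Real.log c + (1-x) * Real.log (1-c))
      (Real.log c + (-1) * Real.log (1-c)) x := by
    have := ((hasDerivAt_id x).mul_const (Real.log c)).add
      (((hasDerivAt_id x).const_sub 1).mul_const (Real.log (1-c)))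
    exact this.congr_deriv (by simp)
  have d3 : HasDerivAt (fun x : ℝ => 2*(x-c)^2) (2*(2*(x-c))) x := by
    have := (((hasDerivAt_id x).sub_const c).pow 2).const_mul (2:ℝ)
    exact this.congr_deriv (by simp)
  have := (((Real.hasDerivAt_mul_log h0.ne').add d1).sub d2).sub d3
  exact this.congr_deriv (by unfold phiAux; ring)

lemma gAux_cont (c : ℝ) : Continuous (gAux c) := by
  have h1 : Continuous fun x : ℝ => x * Real.log x := Real.continuous_mul_log
  have h2 : Continuous fun x : ℝ => (1-x) * Real.log (1-x) :=
    h1.comp (continuous_const.sub continuous_id)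
  apply ((h1.add h2).sub (by fun_prop)).sub (by fun_prop)

lemma pinsker_bin {a c : ℝ} (ha0 : 0 ≤ a) (ha1 : a ≤ 1) (hc0 : 0 < c) (hc1 : c < 1) :
    2*(a-c)^2 ≤ a * Real.log (a/c) + (1-a) * Real.log ((1-a)/(1-c)) := by
  have hc : c ∈ Set.Ioo (0:ℝ) 1 := ⟨hc0, hc1⟩
  have hgc : gAux c c = 0 := by unfold gAux; ring
  have hg : 0 ≤ gAux c a := by
    rcases le_total a c with hac | hca
    · have hanti : AntitoneOn (gAux c) (Set.Icc 0 c) := by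
        apply antitoneOn_of_deriv_nonpos (convex_Icc 0 c) (gAux_cont c).continuousOn
        · intro x hx
          rw [interior_Icc] at hx
          exact (gAux_deriv ⟨hx.1, hx.2.trans hc1⟩).differentiableAt.differentiableWithinAt
        · intro x hx
          rw [interior_Icc] at hx
          have hx' : x ∈ Set.Ioo (0:ℝ) 1 := ⟨hx.1, hx.2.trans hc1⟩
          rw [(gAux_deriv hx').deriv, sub_nonpos]
          exact phiAux_mono hx' hc hx.2.le
      have := hanti ⟨ha0, hac⟩ ⟨hc0.le, le_refl c⟩ hac
      rw [hgc] at this; linarith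
    · have hmono : MonotoneOn (gAux c) (Set.Icc c 1) := by
        apply monotoneOn_of_deriv_nonneg (convex_Icc c 1) (gAux_cont c).continuousOn
        · intro x hx
          rw [interior_Icc] at hx
          exact (gAux_deriv ⟨hc0.trans hx.1, hx.2⟩).differentiableAt.differentiableWithinAt
        · intro x hx
          rw [interior_Icc] at hx
          have hx' : x ∈ Set.Ioo (0:ℝ) 1 := ⟨hc0.trans hx.1, hx.2⟩
          rw [(gAux_deriv hx').deriv, sub_nonneg]
          exact phiAux_mono hc hx' hx.1.le
      have := hmono ⟨le_refl c, hc1.le⟩ ⟨hca, ha1⟩ hca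
      rw [hgc] at this; linarith
  have e1 : a * Real.log (a/c) = a * Real.log a - a * Real.log c := by
    rcases eq_or_lt_of_le ha0 with h | h
    · simp [← h]
    · rw [Real.log_div h.ne' hc0.ne']; ring
  have e2 : (1-a) * Real.log ((1-a)/(1-c)) = (1-a) * Real.log (1-a) - (1-a) * Real.log (1-c) := by
    rcases eq_or_lt_of_le ha1 with h | h
    · rw [h]; simp
    · rw [Real.log_div (by linarith) (by linarith : (1:ℝ) - c ≠ 0)]; ring
  unfold gAux at hg
  linarith

lemma log_sum_aux {α : Type*} (s : Finset α) (p m : α → ℝ)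
    (hp : ∀ x ∈ s, 0 ≤ p x) (hm : ∀ x ∈ s, 0 ≤ m x)
    (hpm : ∀ x ∈ s, 0 < p x → 0 < m x) :
    (∑ x ∈ s, p x) * Real.log ((∑ x ∈ s, p x) / (∑ x ∈ s, m x)) ≤
      ∑ x ∈ s, p x * Real.log (p x / m x) := by
  set Pt := ∑ x ∈ s, p x with hPt
  set Mt := ∑ x ∈ s, m x with hMt
  rcases eq_or_lt_of_le (Finset.sum_nonneg hp) with hP0 | hP0
  · have hz : ∀ x ∈ s, p x = 0 := (Finset.sum_eq_zero_iff_of_nonneg hp).mp hP0.symm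
    rw [hPt, ← hP0, zero_mul]
    apply Finset.sum_nonneg
    intro x hx
    rw [hz x hx, zero_mul]
  · have ⟨x0, hx0, hpx0⟩ : ∃ x ∈ s, 0 < p x := by
      by_contra h
      push_neg at h
      have : Pt ≤ 0 := Finset.sum_nonpos fun x hx => h x hx
      linarith
    have hM0 : 0 < Mt := lt_of_lt_of_le (hpm x0 hx0 hpx0)
      (Finset.single_le_sum hm hx0)
    have key : ∀ x ∈ s, p x * Real.log (Pt/Mt) + (p x - m x * (Pt/Mt))
        ≤ p x * Real.log (p x / m x) := by
      intro x hx
      rcases eq_or_lt_of_le (hp x hx) with h0 | h0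
      · rw [← h0]
        have hmm := hm x hx
        have : 0 ≤ m x * (Pt/Mt) := by positivity
        simp; linarith [this]
      · have hmx := hpm x hx h0
        have h1 : Real.log ((m x * Pt)/(p x * Mt)) ≤ (m x * Pt)/(p x * Mt) - 1 :=
          Real.log_le_sub_one_of_pos (by positivity)
        have h2 : Real.log ((m x * Pt)/(p x * Mt))
            = Real.log (Pt/Mt) - Real.log (p x / m x) := by
          rw [Real.log_div (by positivity) (by positivity),
            Real.log_div (ne_of_gt hP0) (ne_of_gt hM0),
            Real.log_div (ne_of_gt h0) (ne_of_gt hmx),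
            Real.log_mul (ne_of_gt hmx) (ne_of_gt hP0),
            Real.log_mul (ne_of_gt h0) (ne_of_gt hM0)]
          ring
        rw [h2] at h1
        have h3 := mul_le_mul_of_nonneg_left h1 (le_of_lt h0)
        have h4 : p x * ((m x * Pt)/(p x * Mt) - 1) = m x * (Pt/Mt) - p x := by
          field_simp
        rw [h4, mul_sub] at h3
        linarith
    calc Pt * Real.log (Pt/Mt)
        = ∑ x ∈ s, (p x * Real.log (Pt/Mt) + (p x - m x * (Pt/Mt))) := by
          rw [Finset.sum_add_distrib, ← Finset.sum_mul, Finset.sum_sub_distrib,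
            ← Finset.sum_mul, ← hPt, ← hMt]
          field_simp
          ring
      _ ≤ ∑ x ∈ s, p x * Real.log (p x / m x) := Finset.sum_le_sum key

lemma KL_eq {α : Type*} [Fintype α] (p q : α → ℝ) (hp : ∀ x, 0 ≤ p x) :
    KL p q = ∑ x, p x * Real.log (p x / q x) := by
  unfold KL
  apply Finset.sum_congr rfl
  intro x _
  split
  · rfl
  · rename_i h
    have : p x = 0 := le_antisymm (not_lt.mp h) (hp x)
    rw [this, zero_mul]

lemma KL_bound {α : Type*} [Fintype α] (p m : α → ℝ) (E : Finset α)
    (hp : ∀ x, 0 ≤ p x) (hm : ∀ x, 0 ≤ m x) (hpm : ∀ x, 0 < p x → 0 < m x)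
    (hps : ∑ x, p x = 1) (hms : ∑ x, m x = 1) :
    (∑ x ∈ E, p x) * Real.log ((∑ x ∈ E, p x) / (∑ x ∈ E, m x))
      + (1 - ∑ x ∈ E, p x) * Real.log ((1 - ∑ x ∈ E, p x) / (1 - ∑ x ∈ E, m x)) ≤ KL p m := by
  classical
  rw [KL_eq p m hp]
  have hsplit := Finset.sum_add_sum_compl E (fun x => p x * Real.log (p x / m x))
  have hpc : ∑ x ∈ Eᶜ, p x = 1 - ∑ x ∈ E, p x := by
    have := Finset.sum_add_sum_compl E p
    rw [hps] at this; linarith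
  have hmc : ∑ x ∈ Eᶜ, m x = 1 - ∑ x ∈ E, m x := by
    have := Finset.sum_add_sum_compl E m
    rw [hms] at this; linarith
  have h1 := log_sum_aux E p m (fun x _ => hp x) (fun x _ => hm x) (fun x _ => hpm x)
  have h2 := log_sum_aux Eᶜ p m (fun x _ => hp x) (fun x _ => hm x) (fun x _ => hpm x)
  rw [hpc, hmc] at h2
  linarith

lemma pr_nonneg {Ω : Type*} [Fintype Ω] (P : Ω → ℝ) (hP : ∀ ω, 0 ≤ P ω) (E : Ω → Prop) :
    0 ≤ pr P E := by
  classical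
  apply Finset.sum_nonneg
  intro ω _
  split <;> [exact hP ω; exact le_refl 0]

lemma pr_decomp {Ω α : Type*} [Fintype Ω] [Fintype α] (P : Ω → ℝ)
    (X : Ω → α) (T : α → Prop) [DecidablePred T] (U : Ω → Prop) :
    pr P (fun ω => T (X ω) ∧ U ω)
      = ∑ x ∈ Finset.univ.filter T, pr P (fun ω => X ω = x ∧ U ω) := by
  classical
  unfold pr
  conv_rhs => rw [Finset.sum_comm]
  refine Finset.sum_congr rfl fun ω _ => ?_
  rw [Finset.sum_filter, Finset.sum_eq_single (X ω)]
  · by_cases hT : T (X ω) <;> by_cases hU : U ω <;> simp [hT, hU]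
  · intro b _ hb
    simp [(Ne.symm hb : ¬ X ω = b)]
  · simp

/-- the demographic disparity of any classifier is bounded by
`√(2·JS(p₀,p₁))` where `p_s` is the conditional law of `X` given `S = s`. -/
theorem stmt13 {Ω α : Type*} [Fintype Ω] [Fintype α]
    (P : Ω → ℝ) (hP0 : ∀ ω, 0 ≤ P ω) (hP1 : ∑ ω, P ω = 1)
    (S : Ω → Fin 2) (hS : ∀ s, 0 < pr P (fun ω => S ω = s))
    (X : Ω → α) (c : α → Fin 2) :
    |pr P (fun ω => c (X ω) = 1 ∧ S ω = 0) / pr P (fun ω => S ω = 0)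
        - pr P (fun ω => c (X ω) = 1 ∧ S ω = 1) / pr P (fun ω => S ω = 1)| ≤
      Real.sqrt (2 *
        JS (fun x => pr P (fun ω => X ω = x ∧ S ω = 0) / pr P (fun ω => S ω = 0))
           (fun x => pr P (fun ω => X ω = x ∧ S ω = 1) / pr P (fun ω => S ω = 1))) := by
  classical
  set q0 : α → ℝ := fun x => pr P (fun ω => X ω = x ∧ S ω = 0) / pr P (fun ω => S ω = 0)
    with hq0def
  set q1 : α → ℝ := fun x => pr P (fun ω => X ω = x ∧ S ω = 1) / pr P (fun ω => S ω = 1)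
    with hq1def
  set m : α → ℝ := fun x => (q0 x + q1 x) / 2 with hmdef
  set E : Finset α := Finset.univ.filter (fun x => c x = 1) with hEdef
  -- basic positivity
  have hS0 := hS 0
  have hS1 := hS 1
  -- nonnegativity of q0, q1
  have hq0 : ∀ x, 0 ≤ q0 x := fun x =>
    div_nonneg (pr_nonneg P hP0 _) (hS 0).le
  have hq1 : ∀ x, 0 ≤ q1 x := fun x =>
    div_nonneg (pr_nonneg P hP0 _) (hS 1).le
  have hm : ∀ x, 0 ≤ m x := fun x => by
    have := hq0 x; have := hq1 x
    simp only [hmdef]; linarith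
  have hq0m : ∀ x, 0 < q0 x → 0 < m x := fun x h => by
    have := hq1 x; simp only [hmdef]; linarith
  have hq1m : ∀ x, 0 < q1 x → 0 < m x := fun x h => by
    have := hq0 x; simp only [hmdef]; linarith
  -- sums to one
  have hsum : ∀ s : Fin 2, ∑ x, pr P (fun ω => X ω = x ∧ S ω = s) = pr P (fun ω => S ω = s) := by
    intro s
    have := pr_decomp P X (fun _ => True) (fun ω => S ω = s)
    simpa using this.symm
  have hq0s : ∑ x, q0 x = 1 := by
    rw [hq0def]
    rw [← Finset.sum_div, hsum 0, div_self (hS 0).ne']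
  have hq1s : ∑ x, q1 x = 1 := by
    rw [hq1def]
    rw [← Finset.sum_div, hsum 1, div_self (hS 1).ne']
  have hms : ∑ x, m x = 1 := by
    simp only [hmdef]
    rw [← Finset.sum_div, Finset.sum_add_distrib, hq0s, hq1s]
    norm_num
  -- identify probabilities with sums over E
  have hdec : ∀ s : Fin 2, pr P (fun ω => c (X ω) = 1 ∧ S ω = s)
      = ∑ x ∈ E, pr P (fun ω => X ω = x ∧ S ω = s) := by
    intro s
    exact pr_decomp P X (fun x => c x = 1) (fun ω => S ω = s)
  set a : ℝ := ∑ x ∈ E, q0 x with hadef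
  set b : ℝ := ∑ x ∈ E, q1 x with hbdef
  have ha : pr P (fun ω => c (X ω) = 1 ∧ S ω = 0) / pr P (fun ω => S ω = 0) = a := by
    rw [hadef, hdec 0, Finset.sum_div]
  have hb : pr P (fun ω => c (X ω) = 1 ∧ S ω = 1) / pr P (fun ω => S ω = 1) = b := by
    rw [hbdef, hdec 1, Finset.sum_div]
  rw [ha, hb]
  -- range facts
  have ha0 : 0 ≤ a := Finset.sum_nonneg fun x _ => hq0 x
  have hb0 : 0 ≤ b := Finset.sum_nonneg fun x _ => hq1 x
  have ha1 : a ≤ 1 := by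
    rw [hadef, ← hq0s]
    exact Finset.sum_le_sum_of_subset_of_nonneg (Finset.subset_univ E) fun x _ _ => hq0 x
  have hb1 : b ≤ 1 := by
    rw [hbdef, ← hq1s]
    exact Finset.sum_le_sum_of_subset_of_nonneg (Finset.subset_univ E) fun x _ _ => hq1 x
  -- main case split
  rcases eq_or_ne a b with hab | hab
  · rw [hab, sub_self, abs_zero]
    exact Real.sqrt_nonneg _
  have hmE : ∑ x ∈ E, m x = (a + b) / 2 := by
    simp only [hmdef]
    rw [← Finset.sum_div, Finset.sum_add_distrib, ← hadef, ← hbdef]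
  have hc0 : 0 < (a + b) / 2 := by
    rcases lt_or_eq_of_le (by linarith : (0:ℝ) ≤ a + b) with h | h
    · linarith
    · exfalso; exact hab (by linarith)
  have hc1 : (a + b) / 2 < 1 := by
    rcases lt_or_eq_of_le (by linarith : a + b ≤ 2) with h | h
    · linarith
    · exfalso; apply hab
      have h1 : a = 1 := by linarith
      have h2 : b = 1 := by linarith
      rw [h1, h2]
  -- KL bounds
  have hKL0 : 2*(a - (a+b)/2)^2 ≤ KL q0 m := by
    refine le_trans ?_ (KL_bound q0 m E hq0 hm hq0m hq0s hms)
    rw [hmE, ← hadef]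
    exact pinsker_bin ha0 ha1 hc0 hc1
  have hKL1 : 2*(b - (a+b)/2)^2 ≤ KL q1 m := by
    refine le_trans ?_ (KL_bound q1 m E hq1 hm hq1m hq1s hms)
    rw [hmE, ← hbdef]
    exact pinsker_bin hb0 hb1 hc0 hc1
  have hJS : (a - b)^2 ≤ 2 * JS q0 q1 := by
    have : JS q0 q1 = KL q0 m / 2 + KL q1 m / 2 := rfl
    rw [this]
    nlinarith [hKL0, hKL1]
  calc |a - b| = Real.sqrt ((a-b)^2) := (Real.sqrt_sq_eq_abs _).symm
    _ ≤ Real.sqrt (2 * JS q0 q1) := Real.sqrt_le_sqrt hJS
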